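/- Let μ be a regular uncountable cardinal, δ an ordinal, S ⊆ μ stationary, and g : S → des^{<ω}(δ) any function assigning to each α ∈ S a finite sequence of elements of des(δ). Then there is a stationary S' ⊆ S and a uniform total function g* : μ → des^{<ω}(δ) with g*↾S' = g↾S'. Here g* uniform means: all g*(α) have the same length m; for each i < m the sequences g*(α)(i) (α < μ) all have the same length; and for each i < m the map α ↦ g*(α)(i) is either constant or strictly <_lex-increasing. -/

import Mathlib

/-- `o` is an accumulation point of `C`. -/
def IsAcc (o : Ordinal) (C : Set Ordinal) : Prop :=
  o ≠ 0 ∧ ∀ b < o, ∃ c ∈ C, b < c ∧ c < o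

/-- `C` is closed and unbounded (a club) in `μ`. -/
def IsClubIn (C : Set Ordinal) (μ : Ordinal) : Prop :=
  (∀ o < μ, IsAcc o C → o ∈ C) ∧ ∀ b < μ, ∃ c ∈ C, b < c ∧ c < μ

/-- `S` is a stationary subset of `μ`. -/
def IsStationaryIn (S : Set Ordinal) (μ : Ordinal) : Prop :=
  S ⊆ Set.Iio μ ∧ ∀ C : Set Ordinal, IsClubIn C μ → (S ∩ C).Nonempty

/-- `g : μ → des^{<ω}(δ)` is uniform: constant outer length, constant coordinate
lengths, and each coordinate constant or strictly `<_lex`-increasing; all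
coordinates lie in `des(δ)`. -/
def IsUniform (δ μ : Ordinal) (g : Ordinal → List (List Ordinal)) : Prop :=
  (∀ α < μ, ∀ l ∈ g α, l.Pairwise (· > ·) ∧ ∀ x ∈ l, x < δ) ∧
  (∃ m : ℕ, ∀ α < μ, (g α).length = m) ∧
  (∀ i : ℕ, ∃ k : ℕ, ∀ α < μ, ((g α).getD i []).length = k) ∧
  (∀ i : ℕ,
    (∀ α < μ, ∀ β < μ, (g α).getD i [] = (g β).getD i []) ∨
    (∀ α β : Ordinal, α < β → β < μ →
      List.Lex (· < ·) ((g α).getD i []) ((g β).getD i [])))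


section Club

open Ordinal Cardinal Set

universe u v
variable {μ : Cardinal.{u}} (hreg : μ.IsRegular) (hunc : Cardinal.aleph0 < μ)
include hreg hunc

theorem nat_iSup_lt (f : ℕ → Ordinal) (hf : ∀ n, f n < μ.ord) :
    (⨆ n, f n) < μ.ord := by
  apply iSup_lt_ord_lift _ hf
  rw [hreg.cof_eq, Cardinal.mk_nat, Cardinal.lift_aleph0]
  exact hunc

set_option linter.deprecated false in
omit hunc in
theorem bsup_lt {o : Ordinal} (ho : o < μ.ord) (f : ∀ a < o, Ordinal)
    (hf : ∀ a ha, f a ha < μ.ord) : Ordinal.bsup o f < μ.ord := by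
  apply Ordinal.bsup_lt_ord _ hf
  rw [hreg.cof_eq]
  exact Cardinal.lt_ord.1 ho

omit hunc in
theorem succ_lt_mu {x : Ordinal} (hx : x < μ.ord) : x + 1 < μ.ord := by
  rw [Ordinal.add_one_eq_succ]
  exact (Cardinal.isSuccLimit_ord hreg.aleph0_le).succ_lt hx

/-- Closure-point chain helper. -/
theorem chain_helper (next : Ordinal → Ordinal)
    (hnext : ∀ x < μ.ord, x < next x ∧ next x < μ.ord)
    {b : Ordinal} (hb : b < μ.ord) :
    ∃ L, b < L ∧ L < μ.ord ∧ ∀ x < L, ∃ y, x ≤ y ∧ y < L ∧ next y < L := by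
  set c : ℕ → Ordinal := fun n => next^[n] b with hc
  have hstep : ∀ n, c (n + 1) = next (c n) := by
    intro n
    simp [hc, Function.iterate_succ_apply']
  have hlt : ∀ n, c n < μ.ord ∧ c n < c (n + 1) := by
    intro n
    induction n with
    | zero => exact ⟨hb, by rw [hstep]; exact (hnext _ hb).1⟩
    | succ n ih =>
      have h1 : c (n+1) < μ.ord := by rw [hstep]; exact (hnext _ ih.1).2
      exact ⟨h1, by rw [hstep (n+1)]; exact (hnext _ h1).1⟩
  have hmono : StrictMono c := strictMono_nat_of_lt_succ fun n => (hlt n).2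
  set L := ⨆ n, c n with hL
  have hcL : ∀ n, c n < L := by
    intro n
    exact lt_of_lt_of_le (hlt n).2 (Ordinal.le_iSup c (n+1))
  refine ⟨L, ?_, ?_, ?_⟩
  · simpa [hc] using hcL 0
  · exact nat_iSup_lt hreg hunc c fun n => (hlt n).1
  · intro x hx
    rw [hL, Ordinal.lt_iSup_iff] at hx
    obtain ⟨n, hn⟩ := hx
    exact ⟨c n, hn.le, hcL n, by rw [← hstep]; exact hcL (n+1)⟩

/-- Countable intersections of clubs are clubs. -/
theorem clubIn_iInter {ι : Type} [Countable ι] (C : ι → Set Ordinal)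
    (hC : ∀ i, IsClubIn (C i) μ.ord) : IsClubIn (⋂ i, C i) μ.ord := by
  constructor
  · intro o ho hacc
    refine Set.mem_iInter.2 fun i => (hC i).1 o ho ⟨hacc.1, fun b hb => ?_⟩
    obtain ⟨c, hc, hbc, hco⟩ := hacc.2 b hb
    exact ⟨c, (Set.mem_iInter.1 hc) i, hbc, hco⟩
  · intro b hb
    -- witness function
    have hd : ∀ i, ∀ x < μ.ord, ∃ y ∈ C i, x < y ∧ y < μ.ord := fun i x hx => (hC i).2 x hx
    classical
    set d : ι → Ordinal → Ordinal := fun i x =>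
      if h : x < μ.ord then (hd i x h).choose else 0 with hdd
    have hdspec : ∀ i, ∀ x, x < μ.ord → d i x ∈ C i ∧ x < d i x ∧ d i x < μ.ord := by
      intro i x hx
      simp only [hdd, dif_pos hx]
      exact ⟨(hd i x hx).choose_spec.1, (hd i x hx).choose_spec.2.1,
        (hd i x hx).choose_spec.2.2⟩
    set next : Ordinal → Ordinal := fun x => max (x + 1) ((⨆ i, d i x) + 1) with hnextdef
    have hsup : ∀ x < μ.ord, (⨆ i, d i x) < μ.ord := by
      intro x hx
      apply iSup_lt_ord_lift _ (fun i => (hdspec i x hx).2.2)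
      rw [hreg.cof_eq]
      exact lt_of_le_of_lt (Cardinal.lift_le_aleph0.2 (Cardinal.mk_le_aleph0)) hunc
    have hnext : ∀ x < μ.ord, x < next x ∧ next x < μ.ord := by
      intro x hx
      refine ⟨lt_of_lt_of_le (lt_add_one x) (le_max_left _ _), ?_⟩
      apply max_lt (succ_lt_mu hreg hx) (succ_lt_mu hreg (hsup x hx))
    obtain ⟨L, hbL, hLμ, hcl⟩ := chain_helper hreg hunc next hnext hb
    refine ⟨L, ?_, hbL, hLμ⟩
    refine Set.mem_iInter.2 fun i => (hC i).1 L hLμ ⟨?_, ?_⟩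
    · exact fun h => by simp [h] at hbL
    · intro x hx
      obtain ⟨y, hxy, hyL, hnyL⟩ := hcl x hx
      have hyμ : y < μ.ord := hyL.trans hLμ
      refine ⟨d i y, (hdspec i y hyμ).1, lt_of_le_of_lt hxy (hdspec i y hyμ).2.1, ?_⟩
      calc d i y ≤ ⨆ j, d j y := Ordinal.le_iSup (fun j => d j y) i
        _ < next y := lt_of_lt_of_le (lt_add_one _) (le_max_right _ _)
        _ < L := hnyL

theorem statIn_inter_club {S C : Set Ordinal} (hS : IsStationaryIn S μ.ord)
    (hC : IsClubIn C μ.ord) : IsStationaryIn (S ∩ C) μ.ord := by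
  refine ⟨fun x hx => hS.1 hx.1, fun D hD => ?_⟩
  have : IsClubIn (⋂ b : Bool, (if b then C else D)) μ.ord :=
    clubIn_iInter hreg hunc _ (by intro b; cases b <;> simp [hC, hD])
  obtain ⟨x, hxS, hx⟩ := hS.2 _ this
  simp only [Set.mem_iInter] at hx
  have h1 := hx true; have h2 := hx false
  simp at h1 h2
  exact ⟨x, ⟨hxS, h1⟩, h2⟩

/-- From a countable cover of a stationary set, some piece is stationary. -/
theorem stat_of_cover {S : Set Ordinal} (hS : IsStationaryIn S μ.ord)
    {ι : Type} [Countable ι] (T : ι → Set Ordinal) (hcov : S ⊆ ⋃ i, T i) :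
    ∃ i, IsStationaryIn (S ∩ T i) μ.ord := by
  by_contra h
  push_neg at h
  have h' : ∀ i, ∃ C, IsClubIn C μ.ord ∧ (S ∩ T i) ∩ C = ∅ := by
    intro i
    have := h i
    unfold IsStationaryIn at this
    push_neg at this
    obtain ⟨C, hC, hne⟩ := this fun x hx => hS.1 hx.1
    exact ⟨C, hC, hne⟩
  classical
  choose C hC hCe using h'
  obtain ⟨x, hxS, hx⟩ := hS.2 _ (clubIn_iInter hreg hunc C hC)
  obtain ⟨Ti, ⟨i, rfl⟩, hxT⟩ := hcov hxS
  exact Set.eq_empty_iff_forall_notMem.1 (hCe i) x ⟨⟨hxS, hxT⟩, Set.mem_iInter.1 hx i⟩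

/-- Diagonal intersection of clubs is a club. -/
theorem clubIn_diagInter (C : Ordinal → Set Ordinal)
    (hC : ∀ β < μ.ord, IsClubIn (C β) μ.ord) :
    IsClubIn {α | 0 < α ∧ ∀ β < α, α ∈ C β} μ.ord := by
  constructor
  · intro o ho hacc
    refine ⟨pos_iff_ne_zero.2 hacc.1, fun β hβ => ?_⟩
    refine (hC β (hβ.trans ho)).1 o ho ⟨hacc.1, fun b hb => ?_⟩
    obtain ⟨c, hc, hbc, hco⟩ := hacc.2 (max b β) (max_lt hb hβ)
    exact ⟨c, hc.2 β (lt_of_le_of_lt (le_max_right b β) hbc), lt_of_le_of_lt (le_max_left b β) hbc, hco⟩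
  · intro b hb
    classical
    have hd : ∀ β < μ.ord, ∀ x < μ.ord, ∃ y ∈ C β, x < y ∧ y < μ.ord := by
      intro β hβ x hx
      exact (hC β hβ).2 x hx
    set d : Ordinal → Ordinal → Ordinal := fun β x =>
      if h : β < μ.ord ∧ x < μ.ord then (hd β h.1 x h.2).choose else 0 with hdd
    have hdspec : ∀ β x, β < μ.ord → x < μ.ord →
        d β x ∈ C β ∧ x < d β x ∧ d β x < μ.ord := by
      intro β x hβ hx
      simp only [hdd, dif_pos (⟨hβ, hx⟩ : β < μ.ord ∧ x < μ.ord)]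
      exact ⟨(hd β hβ x hx).choose_spec.1, (hd β hβ x hx).choose_spec.2.1,
        (hd β hβ x hx).choose_spec.2.2⟩
    set next : Ordinal → Ordinal := fun x =>
      max (x + 1) ((Ordinal.bsup x (fun β _ => d β x)) + 1) with hnextdef
    have hnext : ∀ x < μ.ord, x < next x ∧ next x < μ.ord := by
      intro x hx
      refine ⟨lt_of_lt_of_le (lt_add_one x) (le_max_left _ _), max_lt (succ_lt_mu hreg hx) ?_⟩
      refine succ_lt_mu hreg (bsup_lt hreg hx _ fun β hβ => ?_)
      exact (hdspec β x (hβ.trans hx) hx).2.2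
    obtain ⟨L, hbL, hLμ, hcl⟩ := chain_helper hreg hunc next hnext hb
    have hLlim : ∀ x < L, x + 1 < L := by
      intro x hx
      obtain ⟨y, hxy, hyL, hnyL⟩ := hcl x hx
      have : x + 1 ≤ next y := le_trans (add_le_add_left hxy 1) (le_max_left _ _)
      exact lt_of_le_of_lt this hnyL
    refine ⟨L, ⟨lt_of_le_of_lt zero_le hbL, ?_⟩, hbL, hLμ⟩
    intro β hβL
    have hβμ : β < μ.ord := hβL.trans hLμ
    refine (hC β hβμ).1 L hLμ ⟨fun h => by simp [h] at hβL, ?_⟩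
    intro x hx
    have hx' : max x (β + 1) < L := max_lt hx (hLlim β hβL)
    obtain ⟨y, hxy, hyL, hnyL⟩ := hcl _ hx'
    have hβy : β < y := lt_of_lt_of_le (lt_of_lt_of_le (lt_add_one β) (le_max_right x (β+1))) hxy
    have hyμ : y < μ.ord := hyL.trans hLμ
    have hspec := hdspec β y hβμ hyμ
    refine ⟨d β y, hspec.1, ?_, ?_⟩
    · exact lt_of_le_of_lt (le_trans (le_max_left x (β+1)) hxy) hspec.2.1
    · calc d β y ≤ Ordinal.bsup y (fun γ _ => d γ y) := Ordinal.le_bsup _ β hβy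
        _ < next y := lt_of_lt_of_le (lt_add_one _) (le_max_right _ _)
        _ < L := hnyL

/-- Fodor's lemma. -/
theorem fodor {A : Set Ordinal} (hA : IsStationaryIn A μ.ord)
    (f : Ordinal → Ordinal) (hf : ∀ α ∈ A, f α < α) :
    ∃ β, IsStationaryIn {α ∈ A | f α = β} μ.ord := by
  by_contra h
  push_neg at h
  have h' : ∀ β, ∃ C, IsClubIn C μ.ord ∧ {α ∈ A | f α = β} ∩ C = ∅ := by
    intro β
    have := h β
    unfold IsStationaryIn at this
    push_neg at this
    obtain ⟨C, hC, hne⟩ := this fun x hx => hA.1 hx.1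
    exact ⟨C, hC, hne⟩
  classical
  choose C hC hCe using h'
  obtain ⟨α, hαA, hα⟩ := hA.2 _ (clubIn_diagInter hreg hunc C fun β _ => hC β)
  have hfα := hf α hαA
  have : α ∈ C (f α) := hα.2 (f α) hfα
  exact Set.eq_empty_iff_forall_notMem.1 (hCe (f α)) α ⟨⟨hαA, rfl⟩, this⟩

omit hunc in
theorem clubIn_univ : IsClubIn Set.univ μ.ord := by
  refine ⟨fun o _ _ => trivial, fun b hb => ⟨b + 1, trivial, lt_add_one b, succ_lt_mu hreg hb⟩⟩

omit hreg hunc in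
theorem not_stat {A : Set Ordinal} (hsub : A ⊆ Set.Iio μ.ord)
    (h : ¬ IsStationaryIn A μ.ord) : ∃ C, IsClubIn C μ.ord ∧ A ∩ C = ∅ := by
  unfold IsStationaryIn at h
  push_neg at h
  exact h hsub

omit hunc in
theorem stat_nonempty {A : Set Ordinal} (hA : IsStationaryIn A μ.ord) : A.Nonempty := by
  obtain ⟨x, hx, -⟩ := hA.2 _ (clubIn_univ hreg)
  exact ⟨x, hx⟩

set_option linter.deprecated false in
/-- Dichotomy: an ordinal-valued function on a stationary set is constant or
strictly increasing on a stationary subset. -/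
theorem dichotomy (f : Ordinal.{u} → Ordinal.{v}) {S : Set Ordinal.{u}}
    (hS : IsStationaryIn S μ.ord) :
    ∃ S', S' ⊆ S ∧ IsStationaryIn S' μ.ord ∧
      ((∀ α ∈ S', ∀ β ∈ S', f α = f β) ∨
       (∀ α ∈ S', ∀ β ∈ S', α < β → f α < f β)) := by
  classical
  set F : Ordinal.{u} → Ordinal.{max v u} := fun α => Ordinal.lift.{u, v} (f α) with hFdef
  have key : ∀ η : Ordinal.{max v u}, ∀ S : Set Ordinal.{u}, IsStationaryIn S μ.ord →
      (∀ α ∈ S, F α < η) → ∃ S', S' ⊆ S ∧ IsStationaryIn S' μ.ord ∧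
      ((∀ α ∈ S', ∀ β ∈ S', F α = F β) ∨
       (∀ α ∈ S', ∀ β ∈ S', α < β → F α < F β)) := by
    intro η
    induction η using Ordinal.induction with
    | _ η IH =>
      intro S hS hbound
      by_cases hA : IsStationaryIn {α ∈ S | ∃ β ∈ S, β < α ∧ F α ≤ F β} μ.ord
      · set A := {α ∈ S | ∃ β ∈ S, β < α ∧ F α ≤ F β} with hAdef
        set r : Ordinal → Ordinal := fun α =>
          if h : ∃ β, β ∈ S ∧ β < α ∧ F α ≤ F β then h.choose else 0 with hrdef
        have hr : ∀ α ∈ A, r α ∈ S ∧ r α < α ∧ F α ≤ F (r α) := by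
          rintro α ⟨hαS, hw⟩
          obtain ⟨β, hβ⟩ := hw
          have hex : ∃ β, β ∈ S ∧ β < α ∧ F α ≤ F β := ⟨β, hβ⟩
          simp only [hrdef, dif_pos hex]
          exact hex.choose_spec
        obtain ⟨β0, hB⟩ := fodor hreg hunc hA r (fun α hα => (hr α hα).2.1)
        set B := {α ∈ A | r α = β0} with hBdef
        obtain ⟨α1, hα1⟩ := stat_nonempty hreg hB
        have hβ0S : β0 ∈ S := by
          have := (hr α1 hα1.1).1
          rwa [hα1.2] at this
        by_cases hc : IsStationaryIn {α ∈ B | F α = F β0} μ.ord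
        · refine ⟨{α ∈ B | F α = F β0}, fun x hx => hx.1.1.1, hc,
            Or.inl fun α hα β hβ => hα.2.trans hβ.2.symm⟩
        · obtain ⟨C1, hC1, hC1e⟩ := not_stat
            (fun x hx => hS.1 hx.1.1.1) hc
          have hB' : IsStationaryIn (B ∩ C1) μ.ord := statIn_inter_club hreg hunc hB hC1
          have hlt : ∀ α ∈ B ∩ C1, F α < F β0 := by
            rintro α ⟨hαB, hαC⟩
            have hle : F α ≤ F β0 := by
              have := (hr α hαB.1).2.2
              rwa [hαB.2] at this
            refine lt_of_le_of_ne hle fun heq => ?_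
            exact Set.eq_empty_iff_forall_notMem.1 hC1e α ⟨⟨hαB, heq⟩, hαC⟩
          obtain ⟨S', hsub, hstat, hdich⟩ :=
            IH (F β0) (hbound β0 hβ0S) (B ∩ C1) hB' hlt
          exact ⟨S', fun x hx => (hsub hx).1.1.1, hstat, hdich⟩
      · obtain ⟨C, hC, hCe⟩ := not_stat (fun x hx => hS.1 hx.1) hA
        refine ⟨S ∩ C, Set.inter_subset_left, statIn_inter_club hreg hunc hS hC, Or.inr ?_⟩
        rintro α ⟨hαS, hαC⟩ β ⟨hβS, hβC⟩ hαβ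
        by_contra hle
        push_neg at hle
        exact Set.eq_empty_iff_forall_notMem.1 hCe β
          ⟨⟨hβS, α, hαS, hαβ, hle⟩, hβC⟩
  obtain ⟨S', h1, h2, h3⟩ := key ((Ordinal.bsup.{u, v} μ.ord (fun β _ => F β)) + 1) S hS
    fun α hα => lt_of_le_of_lt (Ordinal.le_bsup.{u, v} (fun β _ => F β) α (hS.1 hα)) (lt_add_one _)
  refine ⟨S', h1, h2, ?_⟩
  rcases h3 with h | h
  · exact Or.inl fun α hα β hβ => Ordinal.lift_inj.1 (h α hα β hβ)
  · exact Or.inr fun α hα β hβ hl => Ordinal.lift_lt.1 (h α hα β hβ hl)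

omit hunc in
theorem stat_unbounded {A : Set Ordinal} (hA : IsStationaryIn A μ.ord) :
    ∀ b < μ.ord, ∃ y ∈ A, b < y ∧ y < μ.ord := by
  intro b hb
  have hclub : IsClubIn (Set.Ioo b μ.ord) μ.ord := by
    constructor
    · intro o ho hacc
      obtain ⟨c, hc, h0c, hco⟩ := hacc.2 0 (pos_iff_ne_zero.2 hacc.1)
      exact ⟨lt_trans hc.1 hco, ho⟩
    · intro b' hb'
      exact ⟨max b b' + 1,
        ⟨lt_of_le_of_lt (le_max_left b b') (lt_add_one _), succ_lt_mu hreg (max_lt hb hb')⟩,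
        lt_of_le_of_lt (le_max_right b b') (lt_add_one _), succ_lt_mu hreg (max_lt hb hb')⟩
  obtain ⟨y, hyA, hy⟩ := hA.2 _ hclub
  exact ⟨y, hyA, hy.1, hy.2⟩

end Club

/-- Base-`δ` value of a list of ordinals. -/
def lval (δ : Ordinal) : List Ordinal → Ordinal
  | [] => 0
  | a :: l => δ ^ l.length * a + lval δ l

theorem lval_lt {δ : Ordinal} (l : List Ordinal) (h : ∀ x ∈ l, x < δ) :
    lval δ l < δ ^ l.length := by
  induction l with
  | nil => simp [lval]
  | cons a l ih =>
    have ha : a < δ := h a List.mem_cons_self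
    have h1 : lval δ l < δ ^ l.length := ih fun x hx => h x (List.mem_cons_of_mem a hx)
    calc lval δ (a :: l) = δ ^ l.length * a + lval δ l := rfl
      _ < δ ^ l.length * a + δ ^ l.length := add_lt_add_right h1 _
      _ = δ ^ l.length * (a + 1) := by rw [mul_add, mul_one]
      _ ≤ δ ^ l.length * δ := by
          apply mul_le_mul_right
          rwa [Ordinal.add_one_eq_succ, Order.succ_le_iff]
      _ = δ ^ (a :: l).length := by rw [List.length_cons, pow_succ]

theorem lval_lt_of_lex {δ : Ordinal} (l l' : List Ordinal) (hlen : l.length = l'.length)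
    (hl : ∀ x ∈ l, x < δ) (hl' : ∀ x ∈ l', x < δ) (h : List.Lex (· < ·) l l') :
    lval δ l < lval δ l' := by
  induction l generalizing l' with
  | nil => cases h with | nil => simp at hlen
  | cons a l ih =>
    cases h with
    | @rel _ _ b l'' hab =>
      have hn : l.length = l''.length := by simpa using hlen
      have ha : a < δ := hl a List.mem_cons_self
      calc lval δ (a :: l) = δ ^ l.length * a + lval δ l := rfl
        _ < δ ^ l.length * a + δ ^ l.length :=
            add_lt_add_right (lval_lt l fun x hx => hl x (List.mem_cons_of_mem a hx)) _
        _ = δ ^ l.length * (a + 1) := by rw [mul_add, mul_one]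
        _ ≤ δ ^ l.length * b := by
            apply mul_le_mul_right
            rwa [Ordinal.add_one_eq_succ, Order.succ_le_iff]
        _ = δ ^ l''.length * b := by rw [hn]
        _ ≤ δ ^ l''.length * b + lval δ l'' := le_self_add
        _ = lval δ (b :: l'') := rfl
    | @cons _ _ l'' h =>
      have hn : l.length = l''.length := by simpa using hlen
      have := ih l'' hn (fun x hx => hl x (List.mem_cons_of_mem a hx))
        (fun x hx => hl' x (List.mem_cons_of_mem a hx)) h
      show δ ^ l.length * a + lval δ l < δ ^ l''.length * a + lval δ l''
      rw [← hn]
      exact add_lt_add_right this _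

theorem lex_trichotomy (l l' : List Ordinal) :
    List.Lex (· < ·) l l' ∨ l = l' ∨ List.Lex (· < ·) l' l :=
  trichotomous_of (List.Lex (· < ·)) l l'

set_option linter.deprecated false in
set_option maxHeartbeats 1000000 in
/-- Any `g : S → des^{<ω}(δ)` on a stationary `S ⊆ μ` agrees on a stationary
`S' ⊆ S` with a uniform total function `g* : μ → des^{<ω}(δ)`. -/
theorem stmt13 (μ : Cardinal) (hreg : μ.IsRegular) (hunc : Cardinal.aleph0 < μ)
    (δ : Ordinal) (S : Set Ordinal) (hS : IsStationaryIn S μ.ord)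
    (g : Ordinal → List (List Ordinal))
    (hg : ∀ α ∈ S, ∀ l ∈ g α, l.Pairwise (· > ·) ∧ ∀ x ∈ l, x < δ) :
    ∃ S' ⊆ S, IsStationaryIn S' μ.ord ∧
      ∃ gs : Ordinal → List (List Ordinal),
        IsUniform δ μ.ord gs ∧ ∀ α ∈ S', gs α = g α := by
  classical
  -- Step 1: stabilize the length data
  obtain ⟨c, hS1stat⟩ := stat_of_cover hreg hunc hS
    (fun v : List ℕ => {α | (g α).map List.length = v})
    (fun α _ => Set.mem_iUnion.2 ⟨(g α).map List.length, rfl⟩)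
  set S1 : Set Ordinal := S ∩ {α | (g α).map List.length = c} with hS1def
  have hS1sub : S1 ⊆ S := Set.inter_subset_left
  have hcode1 : ∀ α ∈ S1, (g α).map List.length = c := fun α hα => hα.2
  have hglen : ∀ α ∈ S1, (g α).length = c.length := by
    intro α hα
    rw [← hcode1 α hα, List.length_map]
  have hgetlen : ∀ α ∈ S1, ∀ i : ℕ, ((g α).getD i []).length = c.getD i 0 := by
    intro α hα i
    have h1 : ((g α).map List.length).getD i (List.length ([] : List Ordinal)) =
        ((g α).getD i []).length := List.getD_map (g α) [] List.length
    rw [← hcode1 α hα]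
    simpa using h1.symm
  have hmemg : ∀ α ∈ S1, ∀ i < c.length, (g α).getD i [] ∈ g α := by
    intro α hα i hi
    rw [List.getD_eq_getElem _ _ (by rw [hglen α hα]; exact hi)]
    exact List.getElem_mem _
  have hbdd : ∀ α ∈ S1, ∀ i < c.length, ∀ x ∈ (g α).getD i [], x < δ :=
    fun α hα i hi => (hg α (hS1sub hα) _ (hmemg α hα i hi)).2
  -- Step 2: coordinatewise dichotomy
  have step : ∀ j : ℕ, ∃ X, X ⊆ S1 ∧ IsStationaryIn X μ.ord ∧ ∀ i < j,
      (∀ α ∈ X, ∀ β ∈ X, (g α).getD i [] = (g β).getD i []) ∨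
      (∀ α ∈ X, ∀ β ∈ X, α < β →
        List.Lex (· < ·) ((g α).getD i []) ((g β).getD i [])) := by
    intro j
    induction j with
    | zero => exact ⟨S1, subset_rfl, hS1stat, fun i hi => absurd hi (Nat.not_lt_zero i)⟩
    | succ j ihs =>
      obtain ⟨X, hXsub, hXstat, hXprop⟩ := ihs
      by_cases hj : j < c.length
      · obtain ⟨Y, hYsub, hYstat, hdich⟩ :=
          dichotomy hreg hunc (fun α => lval δ ((g α).getD j [])) hXstat
        refine ⟨Y, hYsub.trans hXsub, hYstat, ?_⟩
        intro i hi
        rcases Nat.lt_succ_iff_lt_or_eq.1 hi with hij | heqj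
        · rcases hXprop i hij with h | h
          · exact Or.inl fun α hα β hβ => h α (hYsub hα) β (hYsub hβ)
          · exact Or.inr fun α hα β hβ hlt => h α (hYsub hα) β (hYsub hβ) hlt
        · subst heqj
          have hY1 : Y ⊆ S1 := hYsub.trans hXsub
          rcases hdich with h | h
          · refine Or.inl fun α hα β hβ => ?_
            rcases lex_trichotomy ((g α).getD i []) ((g β).getD i []) with hlex | heq | hlex
            · exact absurd (h α hα β hβ)
                (lval_lt_of_lex _ _
                  (by rw [hgetlen α (hY1 hα) i, hgetlen β (hY1 hβ) i])
                  (hbdd α (hY1 hα) i hj) (hbdd β (hY1 hβ) i hj) hlex).ne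
            · exact heq
            · exact absurd (h α hα β hβ).symm
                (lval_lt_of_lex _ _
                  (by rw [hgetlen α (hY1 hα) i, hgetlen β (hY1 hβ) i])
                  (hbdd β (hY1 hβ) i hj) (hbdd α (hY1 hα) i hj) hlex).ne
          · refine Or.inr fun α hα β hβ hlt => ?_
            have hv := h α hα β hβ hlt
            rcases lex_trichotomy ((g α).getD i []) ((g β).getD i []) with hlex | heq | hlex
            · exact hlex
            · exact absurd hv (by rw [heq]; exact lt_irrefl _)
            · exact absurd hv (lt_asymm (lval_lt_of_lex _ _
                (by rw [hgetlen α (hY1 hα) i, hgetlen β (hY1 hβ) i])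
                (hbdd β (hY1 hβ) i hj) (hbdd α (hY1 hα) i hj) hlex))
      · refine ⟨X, hXsub, hXstat, fun i hi => ?_⟩
        rcases Nat.lt_succ_iff_lt_or_eq.1 hi with hij | heqj
        · exact hXprop i hij
        · subst heqj
          refine Or.inl fun α hα β hβ => ?_
          rw [List.getD_eq_default _ _ (by rw [hglen α (hXsub hα)]; omega),
            List.getD_eq_default _ _ (by rw [hglen β (hXsub hβ)]; omega)]
  obtain ⟨S2, hS2sub, hS2stat, hS2prop⟩ := step c.length
  -- Step 3: enumerate S2
  set T : Set Ordinal := S2 ∪ {x | μ.ord ≤ x} with hTdef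
  have hT : ¬ BddAbove T := by
    rintro ⟨b, hb⟩
    have hx : max (b + 1) μ.ord ∈ T := Or.inr (show μ.ord ≤ _ from le_max_right _ _)
    exact (lt_add_one b).not_ge (le_trans (le_max_left _ _) (hb hx))
  set e : Ordinal → Ordinal := Ordinal.enumOrd T with hedef
  have hmem : ∀ α < μ.ord, e α ∈ S2 ∧ e α < μ.ord := by
    intro α
    induction α using Ordinal.induction with
    | _ α IH =>
      intro hα
      have hs : Ordinal.bsup α (fun β _ => e β) < μ.ord :=
        bsup_lt hreg hα _ fun β hβ => (IH β hβ (hβ.trans hα)).2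
      obtain ⟨y, hyS2, hy1, hy2⟩ := stat_unbounded hreg hS2stat _ hs
      have hle : e α ≤ y := Ordinal.enumOrd_le_of_forall_lt (Or.inl hyS2)
        fun β hβ => lt_of_le_of_lt (Ordinal.le_bsup _ β hβ) hy1
      have heαμ : e α < μ.ord := lt_of_le_of_lt hle hy2
      rcases Ordinal.enumOrd_mem hT α with h | h
      · exact ⟨h, heαμ⟩
      · exact absurd heαμ (not_lt.2 h)
  have hstrict : StrictMono e := Ordinal.enumOrd_strictMono hT
  -- the club of closure points of e
  have hD : IsClubIn {x | 0 < x ∧ ∀ β < x, e β < x} μ.ord := by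
    constructor
    · intro o ho hacc
      refine ⟨pos_iff_ne_zero.2 hacc.1, fun β hβ => ?_⟩
      obtain ⟨d, hd, hβd, hdo⟩ := hacc.2 β hβ
      exact lt_trans (hd.2 β hβd) hdo
    · intro b hb
      set next : Ordinal → Ordinal :=
        fun x => max (x + 1) (Ordinal.bsup (x + 1) (fun β _ => e β) + 1) with hnextdef
      have hn : ∀ x < μ.ord, x < next x ∧ next x < μ.ord := by
        intro x hx
        refine ⟨lt_of_lt_of_le (lt_add_one x) (le_max_left _ _),
          max_lt (succ_lt_mu hreg hx) (succ_lt_mu hreg ?_)⟩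
        exact bsup_lt hreg (succ_lt_mu hreg hx) _
          fun β hβ => (hmem β (hβ.trans (succ_lt_mu hreg hx))).2
      obtain ⟨L, hbL, hLμ, hcl⟩ := chain_helper hreg hunc next hn hb
      refine ⟨L, ⟨lt_of_le_of_lt zero_le hbL, fun β hβ => ?_⟩, hbL, hLμ⟩
      obtain ⟨y, hβy, hyL, hnyL⟩ := hcl β hβ
      calc e β ≤ Ordinal.bsup (y + 1) (fun γ _ => e γ) :=
            Ordinal.le_bsup _ β (lt_of_le_of_lt hβy (lt_add_one y))
        _ < next y := lt_of_lt_of_le (lt_add_one _) (le_max_right _ _)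
        _ < L := hnyL
  have hfix : ∀ α ∈ S2 ∩ {x | 0 < x ∧ ∀ β < x, e β < x}, e α = α := fun α hα =>
    le_antisymm
      (Ordinal.enumOrd_le_of_forall_lt (Or.inl hα.1) fun β hβ => hα.2.2 β hβ)
      (Ordinal.le_enumOrd_self hT)
  refine ⟨S2 ∩ {x | 0 < x ∧ ∀ β < x, e β < x},
    fun x hx => hS1sub (hS2sub hx.1),
    statIn_inter_club hreg hunc hS2stat hD,
    fun α => g (e α), ⟨?_, ⟨c.length, ?_⟩, ?_, ?_⟩, fun α hα => congrArg g (hfix α hα)⟩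
  · exact fun α hα l hl => hg _ (hS1sub (hS2sub (hmem α hα).1)) l hl
  · exact fun α hα => hglen _ (hS2sub (hmem α hα).1)
  · exact fun i => ⟨c.getD i 0, fun α hα => hgetlen _ (hS2sub (hmem α hα).1) i⟩
  · intro i
    by_cases hi : i < c.length
    · rcases hS2prop i hi with h | h
      · exact Or.inl fun α hα β hβ => h _ (hmem α hα).1 _ (hmem β hβ).1
      · exact Or.inr fun α β hαβ hβ =>
          h _ (hmem α (hαβ.trans hβ)).1 _ (hmem β hβ).1 (hstrict hαβ)
    · refine Or.inl fun α hα β hβ => ?_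
      rw [List.getD_eq_default _ _ (by rw [hglen _ (hS2sub (hmem α hα).1)]; omega),
        List.getD_eq_default _ _ (by rw [hglen _ (hS2sub (hmem β hβ).1)]; omega)]
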